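/- arXiv:1110.4060 — 3 statements merged into one kernel-verified Lean document; each statement's English description precedes it below -/
import Mathlib

section
/- Let A be a finite tuple of polytopes indexed by a finite set K, and for J ⊆ K let dim(AJ) denote dim(∑_{j∈J} A(j)) − |J| (where the empty sum is {0}). Then for all I, J ⊆ K, dim(AI) + dim(AJ) ≥ dim(A(I∪J)) + dim(A(I∩J)). -/
open Pointwise MeasureTheory Metric

noncomputable section

/-- Ambient Euclidean space `ℝⁿ`. -/
abbrev V (n : ℕ) : Type := EuclideanSpace ℝ (Fin n)

/-- Dimension of (the affine span of) a subset of `ℝⁿ`. -/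
def affDim {n : ℕ} (s : Set (V n)) : ℕ := Module.finrank ℝ (vectorSpan ℝ s)

/-- A (compact convex) polytope: the convex hull of a nonempty finite set. -/
def IsPolytope {n : ℕ} (P : Set (V n)) : Prop :=
  ∃ F : Finset (V n), F.Nonempty ∧ P = convexHull ℝ (F : Set (V n))

/-- `dim AJ = dim (∑_{j ∈ J} A j) − |J|` for a tuple of polytopes; the empty
Minkowski sum is `{0}` (the `0` of the pointwise monoid on sets). -/
def tdim {n : ℕ} {K : Type} [Fintype K] (A : K → Set (V n)) (J : Finset K) : ℤ :=
  (affDim (∑ j ∈ J, A j) : ℤ) - J.card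


theorem vsSum {n : ℕ} (s t : Set (EuclideanSpace ℝ (Fin n))) (hs : s.Nonempty) (ht : t.Nonempty) :
    vectorSpan ℝ (s + t) = vectorSpan ℝ s ⊔ vectorSpan ℝ t := by
  apply le_antisymm
  · rw [vectorSpan_def, Submodule.span_le]
    rintro x ⟨a, ha, b, hb, rfl⟩
    obtain ⟨a1, ha1, a2, ha2, rfl⟩ := ha
    obtain ⟨b1, hb1, b2, hb2, rfl⟩ := hb
    show a1 + a2 -ᵥ (b1 + b2) ∈ (vectorSpan ℝ s ⊔ vectorSpan ℝ t : Submodule ℝ _)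
    have : a1 + a2 -ᵥ (b1 + b2) = (a1 -ᵥ b1) + (a2 -ᵥ b2) := by
      simp only [vsub_eq_sub]; abel
    rw [this]
    exact Submodule.add_mem_sup (vsub_mem_vectorSpan ℝ ha1 hb1) (vsub_mem_vectorSpan ℝ ha2 hb2)
  · obtain ⟨b0, hb0⟩ := ht
    obtain ⟨a0, ha0⟩ := hs
    apply sup_le
    · rw [vectorSpan_def, Submodule.span_le]
      rintro x ⟨a, ha, b, hb, rfl⟩
      show a -ᵥ b ∈ vectorSpan ℝ (s + t)
      have : a -ᵥ b = (a + b0) -ᵥ (b + b0) := by simp only [vsub_eq_sub]; abel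
      rw [this]
      exact vsub_mem_vectorSpan ℝ (Set.add_mem_add ha hb0) (Set.add_mem_add hb hb0)
    · rw [vectorSpan_def, Submodule.span_le]
      rintro x ⟨a, ha, b, hb, rfl⟩
      show a -ᵥ b ∈ vectorSpan ℝ (s + t)
      have : a -ᵥ b = (a0 + a) -ᵥ (a0 + b) := by simp only [vsub_eq_sub]; abel
      rw [this]
      exact vsub_mem_vectorSpan ℝ (Set.add_mem_add ha0 ha) (Set.add_mem_add ha0 hb)

theorem sumNonempty {n : ℕ} {K : Type} (A : K → Set (V n)) (h : ∀ k, (A k).Nonempty)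
    (J : Finset K) : (∑ j ∈ J, A j).Nonempty := by
  classical
  induction J using Finset.induction_on with
  | empty => exact ⟨0, rfl⟩
  | insert _ _ hx ih =>
    rw [Finset.sum_insert hx]
    exact (h _).add ih

theorem vsBig {n : ℕ} {K : Type} (A : K → Set (V n)) (h : ∀ k, (A k).Nonempty)
    (J : Finset K) : vectorSpan ℝ (∑ j ∈ J, A j) = ⨆ j ∈ J, vectorSpan ℝ (A j) := by
  classical
  induction J using Finset.induction_on with
  | empty =>
    rw [Finset.sum_empty, show (0 : Set (V n)) = {0} from rfl, vectorSpan_singleton]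
    simp
  | @insert a s hx ih =>
    rw [Finset.sum_insert hx, vsSum _ _ (h a) (sumNonempty A h s), ih,
      Finset.iSup_insert]

/-- Submodularity of the dimension function of tuples of polytopes. -/
theorem stmt0 {n : ℕ} {K : Type} [Fintype K] [DecidableEq K]
    (A : K → Set (V n)) (hA : ∀ k, IsPolytope (A k)) (I J : Finset K) :
    tdim A (I ∪ J) + tdim A (I ∩ J) ≤ tdim A I + tdim A J := by
  have hne : ∀ k, (A k).Nonempty := by
    intro k
    obtain ⟨F, hF, hP⟩ := hA k
    rw [hP]
    exact (Finset.coe_nonempty.2 hF).convexHull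
  have hcard : (I ∪ J).card + (I ∩ J).card = I.card + J.card :=
    Finset.card_union_add_card_inter I J
  have hdim : affDim (∑ j ∈ I ∪ J, A j) + affDim (∑ j ∈ I ∩ J, A j) ≤
      affDim (∑ j ∈ I, A j) + affDim (∑ j ∈ J, A j) := by
    unfold affDim
    rw [vsBig A hne, vsBig A hne, vsBig A hne, vsBig A hne]
    set U : Submodule ℝ (V n) := ⨆ j ∈ I, vectorSpan ℝ (A j)
    set W : Submodule ℝ (V n) := ⨆ j ∈ J, vectorSpan ℝ (A j)
    have h1 : (⨆ j ∈ I ∪ J, vectorSpan ℝ (A j) : Submodule ℝ (V n)) = U ⊔ W := Finset.iSup_union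
    have h2 : (⨆ j ∈ I ∩ J, vectorSpan ℝ (A j) : Submodule ℝ (V n)) ≤ U ⊓ W := by
      apply le_inf
      · exact iSup_le fun j => iSup_le fun hj =>
          le_iSup_of_le j (le_iSup_of_le (Finset.mem_of_mem_inter_left hj) le_rfl)
      · exact iSup_le fun j => iSup_le fun hj =>
          le_iSup_of_le j (le_iSup_of_le (Finset.mem_of_mem_inter_right hj) le_rfl)
    rw [h1]
    calc Module.finrank ℝ (U ⊔ W : Submodule ℝ (V n)) +
          Module.finrank ℝ ((⨆ j ∈ I ∩ J, vectorSpan ℝ (A j) : Submodule ℝ (V n)))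
        ≤ Module.finrank ℝ (U ⊔ W : Submodule ℝ (V n)) +
          Module.finrank ℝ (U ⊓ W : Submodule ℝ (V n)) := by
          exact Nat.add_le_add_left (Submodule.finrank_mono h2) _
      _ = Module.finrank ℝ U + Module.finrank ℝ W :=
          Submodule.finrank_sup_add_finrank_inf_eq U W
  unfold tdim
  push_cast
  omega

end
end

section
/- Let A be a K-tuple of polytopes and let m = min_{J⊆K} dim(AJ). If dim(AI) = m and dim(AJ) = m for I, J ⊆ K, then dim(A(I∩J)) = m. Consequently there exists a unique minimal subset I₀ ⊆ K with dim(AI₀) = m. -/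
open Pointwise MeasureTheory Metric

noncomputable section

lemma vectorSpan_add_eq {n : ℕ} {s t : Set (V n)} (hs : s.Nonempty) (ht : t.Nonempty) :
    vectorSpan ℝ (s + t) = vectorSpan ℝ s ⊔ vectorSpan ℝ t := by
  apply le_antisymm
  · rw [vectorSpan_def, Submodule.span_le]
    rintro v ⟨x, hx, y, hy, rfl⟩
    obtain ⟨a, ha, c, hc, rfl⟩ := hx
    obtain ⟨b, hb, d, hd, rfl⟩ := hy
    have : (a + c) -ᵥ (b + d) = (a - b) + (c - d) := by
      simp [vsub_eq_sub]; abel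
    show (a + c) -ᵥ (b + d) ∈ _
    rw [this]
    exact Submodule.add_mem_sup (vsub_mem_vectorSpan ℝ ha hb) (vsub_mem_vectorSpan ℝ hc hd)
  · obtain ⟨c0, hc0⟩ := ht
    obtain ⟨a0, ha0⟩ := hs
    apply sup_le
    · rw [vectorSpan_def, Submodule.span_le]
      rintro v ⟨a, ha, b, hb, rfl⟩
      have : a -ᵥ b = (a + c0) -ᵥ (b + c0) := by simp [vsub_eq_sub]
      show a -ᵥ b ∈ _
      rw [this]
      exact vsub_mem_vectorSpan ℝ (Set.add_mem_add ha hc0) (Set.add_mem_add hb hc0)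
    · rw [vectorSpan_def, Submodule.span_le]
      rintro v ⟨a, ha, b, hb, rfl⟩
      have : a -ᵥ b = (a0 + a) -ᵥ (a0 + b) := by simp [vsub_eq_sub]
      show a -ᵥ b ∈ _
      rw [this]
      exact vsub_mem_vectorSpan ℝ (Set.add_mem_add ha0 ha) (Set.add_mem_add ha0 hb)

lemma sum_nonempty {n : ℕ} {K : Type} [DecidableEq K] (A : K → Set (V n))
    (hA : ∀ k, (A k).Nonempty) (J : Finset K) : (∑ j ∈ J, A j).Nonempty := by
  classical
  induction J using Finset.induction_on with
  | empty => exact ⟨0, by simp [Set.mem_zero]⟩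
  | insert _ _ h ih =>
    rw [Finset.sum_insert h]
    exact (hA _).add ih

lemma vectorSpan_sum {n : ℕ} {K : Type} [DecidableEq K] (A : K → Set (V n))
    (hA : ∀ k, (A k).Nonempty) (J : Finset K) :
    vectorSpan ℝ (∑ j ∈ J, A j) = J.sup (fun j => vectorSpan ℝ (A j)) := by
  classical
  induction J using Finset.induction_on with
  | empty =>
    simp only [Finset.sum_empty, Finset.sup_empty]
    have : (0 : Set (V n)) = {0} := rfl
    rw [this, vectorSpan_singleton]
  | insert _ _ h ih =>
    rw [Finset.sum_insert h, vectorSpan_add_eq (hA _) (sum_nonempty A hA _),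
      Finset.sup_insert, ih]

/-- If the minimum `m` of `J ↦ dim AJ` is attained at `I` and at `J` then it is
attained at `I ∩ J`; consequently there is a unique minimal subset attaining it. -/
theorem stmt1 {n : ℕ} {K : Type} [Fintype K] [DecidableEq K]
    (A : K → Set (V n)) (hA : ∀ k, IsPolytope (A k))
    (m : ℤ) (hm : IsLeast (Set.range (tdim A)) m) :
    (∀ I J : Finset K, tdim A I = m → tdim A J = m → tdim A (I ∩ J) = m) ∧
    ∃! I₀ : Finset K, tdim A I₀ = m ∧ ∀ J : Finset K, tdim A J = m → I₀ ⊆ J := by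
  classical
  have hAne : ∀ k, (A k).Nonempty := by
    intro k
    obtain ⟨F, hF, hP⟩ := hA k
    obtain ⟨x, hx⟩ := hF
    exact ⟨x, hP ▸ subset_convexHull ℝ _ hx⟩
  set W : Finset K → Submodule ℝ (V n) := fun J => J.sup (fun j => vectorSpan ℝ (A j)) with hW
  have hdim : ∀ J : Finset K, tdim A J = (Module.finrank ℝ (W J) : ℤ) - J.card := by
    intro J
    rw [tdim, affDim, vectorSpan_sum A hAne]
  have hWmono : ∀ {I J : Finset K}, I ⊆ J → W I ≤ W J := fun h => Finset.sup_mono h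
  have hsub : ∀ I J : Finset K,
      tdim A (I ∪ J) + tdim A (I ∩ J) ≤ tdim A I + tdim A J := by
    intro I J
    have hcard : ((I ∪ J).card : ℤ) + (I ∩ J).card = I.card + J.card := by
      exact_mod_cast congrArg (Nat.cast : ℕ → ℤ) (Finset.card_union_add_card_inter I J)
    have hWsup : W (I ∪ J) = W I ⊔ W J := Finset.sup_union
    have hWinf : W (I ∩ J) ≤ W I ⊓ W J :=
      le_inf (hWmono Finset.inter_subset_left) (hWmono Finset.inter_subset_right)
    have hfr : Module.finrank ℝ (W (I ∪ J)) + Module.finrank ℝ (W (I ∩ J)) ≤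
        Module.finrank ℝ (W I) + Module.finrank ℝ (W J) := by
      rw [← Submodule.finrank_sup_add_finrank_inf_eq (W I) (W J), hWsup]
      exact Nat.add_le_add_left (Submodule.finrank_mono hWinf) _
    rw [hdim, hdim, hdim, hdim]
    have := (Int.ofNat_le.mpr hfr)
    push_cast at this ⊢
    linarith
  have key : ∀ I J : Finset K, tdim A I = m → tdim A J = m → tdim A (I ∩ J) = m := by
    intro I J hI hJ
    have h1 : m ≤ tdim A (I ∪ J) := hm.2 ⟨_, rfl⟩
    have h2 : m ≤ tdim A (I ∩ J) := hm.2 ⟨_, rfl⟩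
    have := hsub I J
    linarith
  refine ⟨key, ?_⟩
  obtain ⟨I, hI⟩ := hm.1
  set S : Finset (Finset K) := Finset.univ.filter (fun J => tdim A J = m) with hS
  have hIS : I ∈ S := by simp [hS, hI]
  have hSne : S.Nonempty := ⟨I, hIS⟩
  set I₀ : Finset K := S.inf' hSne id with hI₀
  have hmem : ∀ J ∈ S, tdim A J = m := by
    intro J hJ
    simpa [hS] using (Finset.mem_filter.mp hJ).2
  have hI₀m : tdim A I₀ = m := by
    have : I₀ ∈ {J : Finset K | tdim A J = m} := by
      apply Finset.inf'_mem {J : Finset K | tdim A J = m}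
      · intro x hx y hy
        exact key x y hx hy
      · exact hmem
    exact this
  have hI₀min : ∀ J : Finset K, tdim A J = m → I₀ ⊆ J := by
    intro J hJ
    have hJS : J ∈ S := by simp [hS, hJ]
    exact Finset.inf'_le id hJS
  refine ⟨I₀, ⟨hI₀m, hI₀min⟩, ?_⟩
  rintro I₁ ⟨hI₁m, hI₁min⟩
  exact Finset.Subset.antisymm (hI₁min I₀ hI₀m) (hI₀min I₁ hI₁m)

end
end

section
/- In the setting above (K = I ⊔ H, L the orthogonal complement of the span of ∑AI, C the stable intersection of the dual fans of AH): if the stable intersection of L and C is nonempty, then the maximal essential subtuple of A is a subtuple of AI. -/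
open Pointwise MeasureTheory Metric

noncomputable section

open scoped RealInnerProductSpace

/-- The integer lattice `ℤⁿ ⊆ ℝⁿ`. -/
def intLattice (n : ℕ) : AddSubgroup (V n) where
  carrier := {x | ∀ i, ∃ m : ℤ, x i = (m : ℝ)}
  zero_mem' := fun i => ⟨0, by simp⟩
  add_mem' := by
    intro a b ha hb i
    obtain ⟨p, hp⟩ := ha i; obtain ⟨q, hq⟩ := hb i
    exact ⟨p + q, by push_cast; rw [← hp, ← hq]; rfl⟩
  neg_mem' := by
    intro a ha i
    obtain ⟨p, hp⟩ := ha i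
    exact ⟨-p, by push_cast; rw [← hp]; rfl⟩

/-- The index `[ℤⁿ : (ℤⁿ ∩ L) + (ℤⁿ ∩ T)]` of the sum of the lattice points of two
subspaces inside the integer lattice. -/
def latticeIndex {n : ℕ} (L T : Submodule ℝ (V n)) : ℕ :=
  Nat.card (↥(intLattice n) ⧸
    ((intLattice n ⊓ L.toAddSubgroup ⊔ intLattice n ⊓ T.toAddSubgroup).addSubgroupOf
      (intLattice n)))

/-- `x` is a smooth point of `P`: near `x`, the translate `P − x` coincides with a
linear subspace. -/
def IsSmoothPt {n : ℕ} (P : Set (V n)) (x : V n) : Prop :=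
  ∃ (L : Submodule ℝ (V n)) (ε : ℝ), 0 < ε ∧
    (fun y => y - x) '' (P ∩ Metric.ball x ε) = (L : Set (V n)) ∩ Metric.ball 0 ε

open Classical in
/-- The tangent space of `P` at a smooth point `x` (junk value `⊥` elsewhere). -/
def tangentAt {n : ℕ} (P : Set (V n)) (x : V n) : Submodule ℝ (V n) :=
  if h : IsSmoothPt P x then h.choose else ⊥

/-- A rational polyhedron: intersection of finitely many rational half-spaces. -/
def IsRatPolyhedron {n : ℕ} (Q : Set (V n)) : Prop :=
  ∃ s : Finset ((Fin n → ℚ) × ℚ),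
    Q = {x | ∀ p ∈ s, (∑ i, (p.1 i : ℝ) * x i) ≤ (p.2 : ℝ)}

/-- A purely `k`-dimensional rational polyhedral complex: a locally finite union of
closed rational `k`-dimensional polyhedra. -/
def IsPolyComplex {n : ℕ} (k : ℕ) (P : Set (V n)) : Prop :=
  ∃ Fam : Set (Set (V n)), P = ⋃₀ Fam ∧
    (∀ Q ∈ Fam, IsRatPolyhedron Q ∧ Q.Nonempty ∧ affDim Q = k) ∧
    ∀ x : V n, ∃ ε > (0 : ℝ), {Q ∈ Fam | (Q ∩ Metric.ball x ε).Nonempty}.Finite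

/-- A rational linear subspace of `ℝⁿ`. -/
def IsRatSubspace {n : ℕ} (L : Submodule ℝ (V n)) : Prop :=
  ∃ s : Finset (Fin n → ℚ),
    L = Submodule.span ℝ ((fun q => (WithLp.toLp 2 (fun i => (q i : ℝ)) : V n)) '' (s : Set (Fin n → ℚ)))

/-- The tropical intersection number of `P` (with weight `w`) and the translate
`L + x`. -/
def tropWeightSum {n : ℕ} (P : Set (V n)) (w : V n → ℝ) (L : Submodule ℝ (V n))
    (x : V n) : ℝ :=
  ∑ᶠ p ∈ P ∩ ((fun y => y + x) '' (L : Set (V n))),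
    w p * (latticeIndex L (tangentAt P p) : ℝ)

/-- A `k`-dimensional tropical complex: a closed, purely `k`-dimensional rational
polyhedral complex admitting a positive locally constant weight function on its smooth
points, for which the tropical intersection number with every translate of every
rational subspace of complementary dimension (whenever it makes sense, i.e. the
intersection is finite and consists of smooth points) does not depend on the
translation. -/
def IsTropical {n : ℕ} (k : ℕ) (P : Set (V n)) : Prop :=
  IsPolyComplex k P ∧ IsClosed P ∧
  ∃ w : V n → ℝ,
    (∀ x, IsSmoothPt P x → 0 < w x) ∧
    (∀ x, IsSmoothPt P x → ∃ ε > (0 : ℝ), ∀ y ∈ Metric.ball x ε, IsSmoothPt P y → w y = w x) ∧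
    ∀ L : Submodule ℝ (V n), IsRatSubspace L → Module.finrank ℝ L = n - k →
      ∃ c : ℝ, ∀ x : V n,
        ((P ∩ ((fun y => y + x) '' (L : Set (V n)))).Finite ∧
          ∀ p ∈ P ∩ ((fun y => y + x) '' (L : Set (V n))), IsSmoothPt P p) →
        tropWeightSum P w L x = c

/-- The stable intersection of two subsets of `ℝⁿ`. -/
def stableInter {n : ℕ} (P Q : Set (V n)) : Set (V n) :=
  {x | x ∈ P ∩ Q ∧ ∀ ε > (0 : ℝ), ∃ δ > (0 : ℝ), ∀ v : V n, ‖v‖ < δ →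
    ∃ y ∈ ((fun z => z + v) '' P) ∩ Q, dist x y < ε}

/-- The support face `Δ^γ` of `Δ` for a covector `γ` (identified with a vector via the
Euclidean structure): the face where `⟪γ, ·⟫` attains its maximum. -/
def suppFaceV {n : ℕ} (g : V n) (Δ : Set (V n)) : Set (V n) :=
  {x ∈ Δ | ∀ y ∈ Δ, ⟪g, y⟫ ≤ ⟪g, x⟫}

/-- The dual complex (dual fan) of a polytope: all external normal covectors of its
positive-dimensional faces. -/
def dualFan {n : ℕ} (Δ : Set (V n)) : Set (V n) :=
  {g | 1 ≤ affDim (suppFaceV g Δ)}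

/-- Iterated stable intersection of a list of sets (the stable intersection of the
empty list is the ambient space). -/
def stableInterList {n : ℕ} : List (Set (V n)) → Set (V n)
  | [] => Set.univ
  | [Q] => Q
  | Q :: l => stableInter Q (stableInterList l)

/-- A subtuple `AJ` is essential if `dim AJ` is the minimum of `dim` over all
subtuples, and every proper subtuple has strictly bigger `dim`. -/
def Essential {n : ℕ} {K : Type} [Fintype K] (A : K → Set (V n)) (J : Finset K) : Prop :=
  IsLeast (Set.range (tdim A)) (tdim A J) ∧ ∀ I : Finset K, I ⊂ J → tdim A J < tdim A I

/-- `AI` is the maximal essential subtuple of `A`. -/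
def MaxEssentialSub {n : ℕ} {K : Type} [Fintype K] (A : K → Set (V n)) (I : Finset K) :
    Prop :=
  Essential A I ∧ ∀ J : Finset K, Essential A J → J ⊆ I

section LVL

variable {n : ℕ}

/-- One-level transversality: a point of a stable intersection of two sets covered by
finitely many closed pieces lies in pieces whose (linear) spans around the point fill
the whole space. -/
lemma lvl {P Q : Set (V n)} {x : V n} (hx : x ∈ stableInter P Q)
    {ι₁ ι₂ : Type} [Fintype ι₁] [Fintype ι₂] (Pc : ι₁ → Set (V n)) (Qc : ι₂ → Set (V n))
    (hPcl : ∀ i, IsClosed (Pc i)) (hQcl : ∀ j, IsClosed (Qc j))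
    (hP : P ⊆ ⋃ i, Pc i) (hQ : Q ⊆ ⋃ j, Qc j) :
    ∃ i j, x ∈ Pc i ∧ x ∈ Qc j ∧
      Submodule.span ℝ ((fun y => y - x) '' Pc i) ⊔
        Submodule.span ℝ ((fun y => y - x) '' Qc j) = ⊤ := by
  classical
  obtain ⟨⟨hxP, hxQ⟩, hstab⟩ := hx
  by_contra hcon
  push_neg at hcon
  set M : ι₁ → ι₂ → Submodule ℝ (V n) := fun i j =>
    Submodule.span ℝ ((fun y => y - x) '' Pc i) ⊔ Submodule.span ℝ ((fun y => y - x) '' Qc j)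
    with hM
  -- incident pieces exist
  obtain ⟨i0, hi0⟩ := Set.mem_iUnion.mp (hP hxP)
  obtain ⟨j0, hj0⟩ := Set.mem_iUnion.mp (hQ hxQ)
  -- the finite set of (proper) incident subspaces
  set 𝔐 : Finset (Submodule ℝ (V n)) :=
    Finset.univ.image (fun p : ι₁ × ι₂ =>
      if x ∈ Pc p.1 ∧ x ∈ Qc p.2 then M p.1 p.2 else M i0 j0)
    with h𝔐
  have htopn : (⊤ : Submodule ℝ (V n)) ∉ 𝔐 := by
    intro htop
    simp only [h𝔐, Finset.mem_image, Finset.mem_univ, true_and] at htop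
    obtain ⟨p, hp⟩ := htop
    by_cases hinc : x ∈ Pc p.1 ∧ x ∈ Qc p.2
    · rw [if_pos hinc] at hp
      exact hcon p.1 p.2 hinc.1 hinc.2 hp
    · rw [if_neg hinc] at hp
      exact hcon i0 j0 hi0 hj0 hp
  -- a direction avoiding all incident subspaces
  have hne := Subspace.biUnion_ne_univ_of_top_notMem htopn
  obtain ⟨u, hu⟩ : ∃ u : V n, u ∉ ⋃ p ∈ 𝔐, (p : Set (V n)) := by
    by_contra h
    push_neg at h
    exact hne (Set.eq_univ_of_forall h)
  have huM : ∀ i j, x ∈ Pc i → x ∈ Qc j → u ∉ M i j := by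
    intro i j hi hj hmem
    have hmem𝔐 : M i j ∈ 𝔐 := by
      simp only [h𝔐, Finset.mem_image, Finset.mem_univ, true_and]
      exact ⟨(i, j), by rw [if_pos ⟨hi, hj⟩]⟩
    exact hu (Set.mem_biUnion hmem𝔐 hmem)
  have hu0 : u ≠ 0 := by
    intro h
    exact huM i0 j0 hi0 hj0 (h ▸ (M i0 j0).zero_mem)
  -- a radius below the distance to all non-incident pieces
  have hrad : ∀ R : Set (V n), IsClosed R → x ∉ R → ∃ r > (0:ℝ), ∀ y, dist x y < r → y ∉ R := by
    intro R hR hxR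
    obtain ⟨r, hr, hball⟩ := Metric.isOpen_iff.mp hR.isOpen_compl x hxR
    exact ⟨r, hr, fun y hy => hball (by simpa [Metric.mem_ball, dist_comm] using hy)⟩
  have hradP : ∀ i, ∃ r > (0:ℝ), x ∉ Pc i → ∀ y, dist x y < r → y ∉ Pc i := by
    intro i
    by_cases h : x ∈ Pc i
    · exact ⟨1, one_pos, fun h' => absurd h h'⟩
    · obtain ⟨r, hr, h'⟩ := hrad _ (hPcl i) h
      exact ⟨r, hr, fun _ => h'⟩
  have hradQ : ∀ j, ∃ r > (0:ℝ), x ∉ Qc j → ∀ y, dist x y < r → y ∉ Qc j := by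
    intro j
    by_cases h : x ∈ Qc j
    · exact ⟨1, one_pos, fun h' => absurd h h'⟩
    · obtain ⟨r, hr, h'⟩ := hrad _ (hQcl j) h
      exact ⟨r, hr, fun _ => h'⟩
  choose rP hrP hrP' using hradP
  choose rQ hrQ hrQ' using hradQ
  -- global radius
  obtain ⟨ρ, hρ, hρP, hρQ⟩ : ∃ ρ > (0:ℝ), (∀ i, ρ ≤ rP i) ∧ (∀ j, ρ ≤ rQ j) := by
    have h1 : (Finset.univ.image rP ∪ Finset.univ.image rQ ∪ {1}).Nonempty :=
      ⟨1, by simp⟩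
    set s := Finset.univ.image rP ∪ Finset.univ.image rQ ∪ {1} with hs
    refine ⟨s.min' h1, ?_, ?_, ?_⟩
    · have : ∀ a ∈ s, (0:ℝ) < a := by
        intro a ha
        simp only [hs, Finset.mem_union, Finset.mem_image, Finset.mem_singleton] at ha
        rcases ha with (⟨i, _, rfl⟩ | ⟨j, _, rfl⟩) | rfl
        · exact hrP i
        · exact hrQ j
        · exact one_pos
      exact this _ (Finset.min'_mem s h1)
    · intro i
      exact Finset.min'_le s _ (by simp [hs])
    · intro j
      exact Finset.min'_le s _ (by simp [hs])
  -- invoke stability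
  obtain ⟨δ, hδ, hst⟩ := hstab (ρ/2) (half_pos hρ)
  set c : ℝ := min δ ρ / (2 * ‖u‖) with hc
  have hc0 : 0 < c := by
    apply div_pos (lt_min hδ hρ) (mul_pos two_pos (norm_pos_iff.mpr hu0))
  obtain ⟨v, hv⟩ : ∃ v : V n, v = c • u := ⟨_, rfl⟩
  have hvn : ‖v‖ = min δ ρ / 2 := by
    rw [hv, norm_smul, Real.norm_eq_abs, abs_of_pos hc0, hc, div_mul_eq_mul_div,
      mul_div_mul_right _ _ (norm_ne_zero_iff.mpr hu0)]
  have hvδ : ‖v‖ < δ := by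
    rw [hvn]
    calc min δ ρ / 2 < min δ ρ := by
          have := lt_min hδ hρ; linarith
      _ ≤ δ := min_le_left _ _
  obtain ⟨y, ⟨hyP, hyQ⟩, hyx⟩ := hst v hvδ
  obtain ⟨p, hpP, hpy⟩ := hyP
  -- p and y are close to x
  have hvρ : ‖v‖ ≤ ρ / 2 := by
    rw [hvn]
    have : min δ ρ ≤ ρ := min_le_right _ _
    linarith
  have hdxy : dist x y < ρ/2 := hyx
  have hdxp : dist x p < ρ := by
    have : dist y p = ‖v‖ := by
      rw [← hpy, dist_eq_norm, add_sub_cancel_left]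
    calc dist x p ≤ dist x y + dist y p := dist_triangle _ _ _
      _ < ρ/2 + ρ/2 := by rw [this]; exact add_lt_add_of_lt_of_le hdxy hvρ
      _ = ρ := by ring
  -- the covering pieces of p and y are incident
  obtain ⟨i1, hi1⟩ := Set.mem_iUnion.mp (hP hpP)
  obtain ⟨j1, hj1⟩ := Set.mem_iUnion.mp (hQ hyQ)
  have hxi1 : x ∈ Pc i1 := by
    by_contra h
    exact hrP' i1 h p (lt_of_lt_of_le hdxp (hρP i1)) hi1
  have hxj1 : x ∈ Qc j1 := by
    by_contra h
    exact hrQ' j1 h y (lt_of_lt_of_le (lt_trans hdxy (by linarith)) (hρQ j1)) hj1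
  -- v lies in the incident subspace
  have hvM : v ∈ M i1 j1 := by
    have h1 : y - x ∈ Submodule.span ℝ ((fun y => y - x) '' Qc j1) :=
      Submodule.subset_span ⟨y, hj1, rfl⟩
    have h2 : p - x ∈ Submodule.span ℝ ((fun y => y - x) '' Pc i1) :=
      Submodule.subset_span ⟨p, hi1, rfl⟩
    have : v = (y - x) - (p - x) := by
      rw [sub_sub_sub_cancel_right]
      exact eq_sub_of_add_eq (by rw [add_comm]; exact hpy)
    rw [this]
    exact Submodule.sub_mem _ (Submodule.mem_sup_right h1) (Submodule.mem_sup_left h2)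
  have huM' : u ∈ M i1 j1 := by
    have := (M i1 j1).smul_mem c⁻¹ hvM
    rwa [hv, smul_smul, inv_mul_cancel₀ (ne_of_gt hc0), one_smul] at this
  exact huM i1 j1 hxi1 hxj1 huM'

end LVL
section B1

variable {n : ℕ}

/-- If `y` is in the dual fan of the polytope `conv F`, then `y` is orthogonal to the
difference of two distinct points of `F`. -/
lemma dualFan_subset_pairs {F : Finset (V n)} (hF : F.Nonempty) {y : V n}
    (hy : y ∈ dualFan (convexHull ℝ (F : Set (V n)))) :
    ∃ u ∈ F, ∃ v ∈ F, u ≠ v ∧ ⟪y, u - v⟫ = 0 := by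
  classical
  obtain ⟨u0, hu0F, hu0⟩ := F.exists_max_image (fun w => ⟪y, w⟫) hF
  by_cases hex : ∃ v ∈ F, v ≠ u0 ∧ ⟪y, v⟫ = ⟪y, u0⟫
  · obtain ⟨v, hvF, hvne, hveq⟩ := hex
    exact ⟨u0, hu0F, v, hvF, fun h => hvne h.symm, by rw [inner_sub_right, hveq, sub_self]⟩
  · exfalso
    push_neg at hex
    -- every point of the support face equals u0
    have hstrict : ∀ v ∈ F, v ≠ u0 → ⟪y, v⟫ < ⟪y, u0⟫ := by
      intro v hv hne
      exact lt_of_le_of_ne (hu0 v hv) (hex v hv hne)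
    have hface : suppFaceV y (convexHull ℝ (F : Set (V n))) ⊆ {u0} := by
      intro x hx
      obtain ⟨hxm, hxmax⟩ := hx
      -- x is in the hull with weights w
      obtain ⟨w, hw0, hw1, hwx⟩ := Finset.mem_convexHull'.mp hxm
      have hu0m : u0 ∈ convexHull ℝ (F : Set (V n)) :=
        subset_convexHull ℝ _ hu0F
      have hxle : ⟪y, x⟫ ≤ ⟪y, u0⟫ := by
        rw [← hwx, inner_sum]
        calc ∑ z ∈ F, ⟪y, w z • z⟫ = ∑ z ∈ F, w z * ⟪y, z⟫ :=
              Finset.sum_congr rfl fun z _ => real_inner_smul_right y z (w z)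
          _ ≤ ∑ z ∈ F, w z * ⟪y, u0⟫ := by
              apply Finset.sum_le_sum
              intro z hz
              exact mul_le_mul_of_nonneg_left (hu0 z hz) (hw0 z hz)
          _ = ⟪y, u0⟫ := by rw [← Finset.sum_mul, hw1, one_mul]
      have hxeq : ⟪y, x⟫ = ⟪y, u0⟫ := le_antisymm hxle (hxmax u0 hu0m)
      -- all weight is concentrated on u0
      have hzero : ∀ z ∈ F, z ≠ u0 → w z = 0 := by
        by_contra hcc
        push_neg at hcc
        obtain ⟨z0, hz0F, hz0ne, hz0w⟩ := hcc
        have hz0w' : 0 < w z0 := lt_of_le_of_ne (hw0 z0 hz0F) (Ne.symm hz0w)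
        have : ⟪y, x⟫ < ⟪y, u0⟫ := by
          rw [← hwx, inner_sum]
          have heq : ∀ z ∈ F, ⟪y, w z • z⟫ = w z * ⟪y, z⟫ :=
            fun z _ => real_inner_smul_right y z (w z)
          rw [Finset.sum_congr rfl heq]
          calc ∑ z ∈ F, w z * ⟪y, z⟫
              < ∑ z ∈ F, w z * ⟪y, u0⟫ := by
                apply Finset.sum_lt_sum
                · intro z hz
                  exact mul_le_mul_of_nonneg_left (hu0 z hz) (hw0 z hz)
                · exact ⟨z0, hz0F, by
                    apply mul_lt_mul_of_pos_left (hstrict z0 hz0F hz0ne) hz0w'⟩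
            _ = ⟪y, u0⟫ := by rw [← Finset.sum_mul, hw1, one_mul]
        exact absurd hxeq (ne_of_lt this)
      have hwu0 : w u0 = 1 := by
        have h := hw1
        rw [← Finset.sum_subset (Finset.singleton_subset_iff.mpr hu0F)
          (fun z hz hz' => hzero z hz (by simpa using hz'))] at h
        simpa using h
      have : x = u0 := by
        rw [← hwx, Finset.sum_eq_single u0 (fun z hz hz' => by rw [hzero z hz hz', zero_smul])
          (fun h => absurd hu0F h)]
        rw [hwu0, one_smul]
      exact this
    -- contradiction with affDim ≥ 1
    have hdim : affDim (suppFaceV y (convexHull ℝ (F : Set (V n)))) = 0 := by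
      unfold affDim
      have : vectorSpan ℝ (suppFaceV y (convexHull ℝ (F : Set (V n)))) ≤
          vectorSpan ℝ ({u0} : Set (V n)) := vectorSpan_mono ℝ hface
      rw [vectorSpan_singleton] at this
      rw [le_bot_iff.mp this]
      exact finrank_bot ℝ (V n)
    rw [dualFan, Set.mem_setOf_eq, hdim] at hy
    exact absurd hy (by norm_num)

end B1
section REC

variable {n κ : ℕ}

/-- Membership in the orthogonal complement of a span, via generators. -/
lemma mem_orthogonal_span {S : Set (V n)} {z : V n} :
    z ∈ (Submodule.span ℝ S)ᗮ ↔ ∀ s ∈ S, ⟪s, z⟫ = 0 := by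
  constructor
  · intro hz s hs
    exact (Submodule.mem_orthogonal _ _).mp hz s (Submodule.subset_span hs)
  · intro h
    rw [Submodule.mem_orthogonal]
    intro u hu
    induction hu using Submodule.span_induction with
    | mem s hs => exact h s hs
    | zero => simp
    | add a b _ _ ha hb => rw [inner_add_left, ha, hb, add_zero]
    | smul c a _ ha => rw [real_inner_smul_left, ha, mul_zero]

/-- The span of the differences from a point of a submodule lies in the submodule. -/
lemma span_sub_le {K : Submodule ℝ (V n)} {z : V n} (hz : z ∈ K) :
    Submodule.span ℝ ((fun y => y - z) '' (K : Set (V n))) ≤ K := by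
  rw [Submodule.span_le]
  rintro _ ⟨y, hy, rfl⟩
  exact K.sub_mem hy hz

/-- If the orthogonal complements of two submodules sup to the whole space, the
submodules intersect trivially. -/
lemma inf_eq_bot_of_orth_sup {A B : Submodule ℝ (V n)} (h : Aᗮ ⊔ Bᗮ = ⊤) :
    A ⊓ B = ⊥ := by
  have h1 : A ⊓ B ≤ Aᗮᗮ ⊓ Bᗮᗮ :=
    inf_le_inf A.le_orthogonal_orthogonal B.le_orthogonal_orthogonal
  rw [Submodule.inf_orthogonal, h, Submodule.top_orthogonal_eq_bot] at h1
  exact le_bot_iff.mp h1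

/-- certificate goodness: linear independence of the selected vectors over `l`. -/
def GoodC (l : List (Fin κ)) (f : Fin κ → V n) : Prop :=
  ∀ c : Fin κ → ℝ, ∑ h ∈ l.toFinset, c h • f h = 0 → ∀ h ∈ l, c h = 0

open Classical in
/-- The finite set of good certificates along `l`. -/
noncomputable def goodCerts (E : Fin κ → Finset (V n)) (l : List (Fin κ)) :
    Finset (Fin κ → V n) :=
  (Fintype.piFinset fun h => if h ∈ l then E h else {0}).filter (GoodC l)

lemma stableInterList_cons {Q : Set (V n)} {l : List (Set (V n))} (hl : l ≠ []) :
    stableInterList (Q :: l) = stableInter Q (stableInterList l) := by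
  match l with
  | [] => exact absurd rfl hl
  | R :: l' => rfl

/-- Recursive extraction of an independent family of orthogonal vectors from a point
of the iterated stable intersection of dual fans. -/
lemma rec_cert (A : Fin κ → Set (V n)) (E : Fin κ → Finset (V n))
    (hE0 : ∀ h, (0 : V n) ∉ E h)
    (hEcov : ∀ h (y : V n), y ∈ dualFan (A h) → ∃ e ∈ E h, ⟪e, y⟫ = 0) :
    ∀ l : List (Fin κ), l.Nodup →
      ∀ z ∈ stableInterList (l.map fun h => dualFan (A h)),
        ∃ f ∈ goodCerts E l,
          z ∈ ((Submodule.span ℝ (f '' {h | h ∈ l}))ᗮ : Set (V n)) := by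
  classical
  intro l
  induction l with
  | nil =>
    intro _ z _
    refine ⟨fun _ => 0, ?_, ?_⟩
    · rw [goodCerts, Finset.mem_filter]
      constructor
      · rw [Fintype.mem_piFinset]
        intro h
        rw [if_neg (List.not_mem_nil (a := h))]
        exact Finset.mem_singleton_self 0
      · intro c _ h hh
        exact absurd hh (List.not_mem_nil (a := h))
    · have : ({h : Fin κ | h ∈ ([] : List (Fin κ))} : Set (Fin κ)) = ∅ := by
        ext h; simp
      rw [this, Set.image_empty, Submodule.span_empty, Submodule.bot_orthogonal_eq_top]
      trivial
  | cons h0 tl IH =>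
    intro hnd z hz
    have hh0tl : h0 ∉ tl := (List.nodup_cons.mp hnd).1
    have htlnd : tl.Nodup := (List.nodup_cons.mp hnd).2
    -- obtain e and (for nonempty tails) the tail certificate by the one-level lemma
    obtain ⟨e, he, f, hf, hze, hzf, hinf⟩ :
        ∃ e, e ∈ E h0 ∧ ∃ f, f ∈ goodCerts E tl ∧ ⟪e, z⟫ = 0 ∧
          z ∈ ((Submodule.span ℝ (f '' {h | h ∈ tl}))ᗮ : Set (V n)) ∧
          (ℝ ∙ e) ⊓ Submodule.span ℝ (f '' {h | h ∈ tl}) = ⊥ := by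
      match tl, htlnd, IH with
      | [], _, _ =>
        have hz' : z ∈ dualFan (A h0) := by
          simpa [stableInterList] using hz
        obtain ⟨e, he, hez⟩ := hEcov h0 z hz'
        refine ⟨e, he, fun _ => 0, ?_, hez, ?_, ?_⟩
        · rw [goodCerts, Finset.mem_filter]
          refine ⟨?_, ?_⟩
          · rw [Fintype.mem_piFinset]
            intro h
            rw [if_neg (List.not_mem_nil (a := h))]
            exact Finset.mem_singleton_self 0
          · intro c _ h hh
            exact absurd hh (List.not_mem_nil (a := h))
        · have : ({h : Fin κ | h ∈ ([] : List (Fin κ))} : Set (Fin κ)) = ∅ := by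
            ext h; simp
          rw [this, Set.image_empty, Submodule.span_empty, Submodule.bot_orthogonal_eq_top]
          trivial
        · have : ({h : Fin κ | h ∈ ([] : List (Fin κ))} : Set (Fin κ)) = ∅ := by
            ext h; simp
          rw [this, Set.image_empty, Submodule.span_empty, inf_bot_eq]
      | t0 :: tl', htlnd, IH =>
        have hz' : z ∈ stableInter (dualFan (A h0))
            (stableInterList ((t0 :: tl').map fun h => dualFan (A h))) := by
          have : ((h0 :: t0 :: tl').map fun h => dualFan (A h)) =
              dualFan (A h0) :: ((t0 :: tl').map fun h => dualFan (A h)) := rfl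
          rw [this] at hz
          exact hz
        -- covers
        have hcovP : dualFan (A h0) ⊆
            ⋃ e : ↥(E h0), (((ℝ ∙ (e : V n))ᗮ : Submodule ℝ (V n)) : Set (V n)) := by
          intro y hy
          obtain ⟨e, he, hey⟩ := hEcov h0 y hy
          exact Set.mem_iUnion.mpr ⟨⟨e, he⟩,
            Submodule.mem_orthogonal_singleton_iff_inner_right.mpr hey⟩
        have hcovQ : stableInterList ((t0 :: tl').map fun h => dualFan (A h)) ⊆
            ⋃ f : ↥(goodCerts E (t0 :: tl')),
              (((Submodule.span ℝ ((f : Fin κ → V n) '' {h | h ∈ t0 :: tl'}))ᗮ :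
                Submodule ℝ (V n)) : Set (V n)) := by
          intro y hy
          obtain ⟨f, hfm, hfz⟩ := IH htlnd y hy
          exact Set.mem_iUnion.mpr ⟨⟨f, hfm⟩, hfz⟩
        obtain ⟨e, f, hzPe, hzQf, hspan⟩ := lvl hz'
          (fun e : ↥(E h0) => (((ℝ ∙ (e : V n))ᗮ : Submodule ℝ (V n)) : Set (V n)))
          (fun f : ↥(goodCerts E (t0 :: tl')) =>
            (((Submodule.span ℝ ((f : Fin κ → V n) '' {h | h ∈ t0 :: tl'}))ᗮ :
              Submodule ℝ (V n)) : Set (V n)))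
          (fun _ => Submodule.closed_of_finiteDimensional _)
          (fun _ => Submodule.closed_of_finiteDimensional _) hcovP hcovQ
        refine ⟨e, e.2, f, f.2,
          Submodule.mem_orthogonal_singleton_iff_inner_right.mp hzPe, hzQf, ?_⟩
        apply inf_eq_bot_of_orth_sup
        rw [eq_top_iff, ← hspan]
        exact sup_le_sup (span_sub_le hzPe) (span_sub_le hzQf)
    -- assemble the certificate for `h0 :: tl`
    have he0 : (e : V n) ≠ 0 := fun h => hE0 h0 (h ▸ he)
    set f' : Fin κ → V n := Function.update f h0 e with hf'
    have hf'h0 : f' h0 = e := Function.update_self h0 e f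
    have hf'ne : ∀ h, h ≠ h0 → f' h = f h := fun h hh => Function.update_of_ne hh e f
    have hfmem := (Finset.mem_filter.mp hf).1
    have hfgood : GoodC tl f := (Finset.mem_filter.mp hf).2
    rw [Fintype.mem_piFinset] at hfmem
    refine ⟨f', ?_, ?_⟩
    · rw [goodCerts, Finset.mem_filter]
      constructor
      · rw [Fintype.mem_piFinset]
        intro h
        by_cases hh : h = h0
        · subst hh
          rw [hf'h0, if_pos (List.mem_cons_self (a := h) (l := tl))]
          exact he
        · rw [hf'ne h hh]
          have := hfmem h
          by_cases htl : h ∈ tl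
          · rw [if_pos htl] at this
            rw [if_pos (List.mem_cons_of_mem h0 htl)]
            exact this
          · rw [if_neg htl] at this
            rw [if_neg (by simp [hh, htl])]
            exact this
      · -- independence
        intro c hc h hh
        have hsum : c h0 • (e : V n) + ∑ h ∈ tl.toFinset, c h • f h = 0 := by
          have htf : (h0 :: tl).toFinset = insert h0 tl.toFinset := by
            simp [List.toFinset_cons]
          rw [htf, Finset.sum_insert (by simpa using hh0tl), hf'h0] at hc
          rw [← hc]
          congr 1
          apply Finset.sum_congr rfl
          intro h' hh'
          rw [hf'ne h' (by rintro rfl; exact hh0tl (List.mem_toFinset.mp hh'))]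
        have hmem1 : c h0 • (e : V n) ∈ ℝ ∙ (e : V n) :=
          Submodule.smul_mem _ _ (Submodule.mem_span_singleton_self _)
        have hmem2 : c h0 • (e : V n) ∈ Submodule.span ℝ (f '' {h | h ∈ tl}) := by
          have : c h0 • (e : V n) = -∑ h ∈ tl.toFinset, c h • f h := by
            rw [eq_neg_iff_add_eq_zero]; exact hsum
          rw [this]
          apply Submodule.neg_mem
          apply Submodule.sum_mem
          intro h' hh'
          exact Submodule.smul_mem _ _
            (Submodule.subset_span ⟨h', List.mem_toFinset.mp hh', rfl⟩)
        have hch0 : c h0 = 0 := by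
          have : c h0 • (e : V n) = 0 := by
            have := Submodule.mem_inf.mpr ⟨hmem1, hmem2⟩
            rw [hinf] at this
            exact this
          exact (smul_eq_zero.mp this).resolve_right he0
        rcases List.mem_cons.mp hh with rfl | hhtl
        · exact hch0
        · apply hfgood c _ h hhtl
          have : ∑ h ∈ tl.toFinset, c h • f h = 0 := by
            have := hsum
            rw [hch0, zero_smul, zero_add] at this
            exact this
          exact this
    · rw [SetLike.mem_coe, mem_orthogonal_span]
      rintro s ⟨h, hh, rfl⟩
      rcases List.mem_cons.mp hh with rfl | hhtl
      · rw [hf'h0]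
        exact hze
      · rw [hf'ne h (by rintro rfl; exact hh0tl hhtl)]
        exact mem_orthogonal_span.mp hzf (f h) ⟨h, hhtl, rfl⟩

end REC
section COMB

variable {n κ : ℕ}

lemma vectorSpan_le_add_right {s t : Set (V n)} (ht : t.Nonempty) :
    vectorSpan ℝ s ≤ vectorSpan ℝ (s + t) := by
  rw [vectorSpan_def, vectorSpan_def]
  apply Submodule.span_mono
  rintro _ ⟨a, ha, b, hb, rfl⟩
  obtain ⟨c, hc⟩ := ht
  have h1 : a + c ∈ s + t := Set.add_mem_add ha hc
  have h2 : b + c ∈ s + t := Set.add_mem_add hb hc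
  have : (fun x1 x2 => x1 -ᵥ x2) a b = (a + c) -ᵥ (b + c) := by
    show a -ᵥ b = _
    rw [vsub_eq_sub, vsub_eq_sub]
    abel
  rw [this]
  exact Set.vsub_mem_vsub h1 h2

lemma vectorSpan_le_add_left {s t : Set (V n)} (hs : s.Nonempty) :
    vectorSpan ℝ t ≤ vectorSpan ℝ (s + t) := by
  rw [add_comm s t]
  exact vectorSpan_le_add_right hs

lemma sum_sets_nonempty (A : Fin κ → Set (V n)) (hA : ∀ i, (A i).Nonempty)
    (J : Finset (Fin κ)) : (∑ j ∈ J, A j).Nonempty := by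
  classical
  induction J using Finset.induction with
  | empty =>
    exact ⟨0, by simp [Set.zero_mem_zero]⟩
  | insert _ _ hx ih =>
    rw [Finset.sum_insert hx]
    obtain ⟨a, ha⟩ := hA _
    obtain ⟨b, hb⟩ := ih
    exact ⟨a + b, Set.add_mem_add ha hb⟩

end COMB
/-- Proposition 2.9(2): if the stable intersection of the orthogonal complement `L` of
the span of `∑ AI` with the stable intersection `C` of the dual fans of `AH` is
nonempty (`K = I ⊔ H`), then the maximal essential subtuple of `A` is a subtuple
of `AI`. -/
theorem stmt12 {n κ : ℕ} (A : Fin κ → Set (V n)) (hA : ∀ i, IsPolytope (A i))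
    (I H : Finset (Fin κ)) (hdisj : Disjoint I H) (hcover : I ∪ H = Finset.univ)
    (hne : (stableInter
      (((vectorSpan ℝ (∑ i ∈ I, A i))ᗮ : Submodule ℝ (V n)) : Set (V n))
      (stableInterList ((H.sort (· ≤ ·)).map (fun h => dualFan (A h))))).Nonempty) :
    ∀ J : Finset (Fin κ), MaxEssentialSub A J → J ⊆ I := by
  classical
  intro J hJ
  -- vertex sets of the polytopes
  choose F hFne hFeq using hA
  have hAne : ∀ i, (A i).Nonempty := by
    intro i
    obtain ⟨a, ha⟩ := hFne i
    exact ⟨a, by rw [hFeq i]; exact subset_convexHull ℝ _ ha⟩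
  -- edge vector candidates
  set E : Fin κ → Finset (V n) := fun h =>
    ((F h ×ˢ F h).filter fun p => p.1 ≠ p.2).image fun p => p.1 - p.2 with hE
  have hE0 : ∀ h, (0 : V n) ∉ E h := by
    intro h hmem
    rw [hE, Finset.mem_image] at hmem
    obtain ⟨p, hp, hp0⟩ := hmem
    rw [Finset.mem_filter] at hp
    exact hp.2 (sub_eq_zero.mp hp0)
  have hEcov : ∀ h (y : V n), y ∈ dualFan (A h) → ∃ e ∈ E h, ⟪e, y⟫ = 0 := by
    intro h y hy
    rw [hFeq h] at hy
    obtain ⟨u, hu, v, hv, huv, hperp⟩ := dualFan_subset_pairs (hFne h) hy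
    refine ⟨u - v, ?_, by rw [real_inner_comm]; exact hperp⟩
    rw [hE, Finset.mem_image]
    exact ⟨(u, v), Finset.mem_filter.mpr ⟨Finset.mem_product.mpr ⟨hu, hv⟩, huv⟩, rfl⟩
  have hEspan : ∀ h, ∀ e ∈ E h, e ∈ vectorSpan ℝ (A h) := by
    intro h e he
    rw [hE, Finset.mem_image] at he
    obtain ⟨p, hp, rfl⟩ := he
    rw [Finset.mem_filter, Finset.mem_product] at hp
    have h1 : p.1 ∈ A h := by rw [hFeq h]; exact subset_convexHull ℝ _ hp.1.1
    have h2 : p.2 ∈ A h := by rw [hFeq h]; exact subset_convexHull ℝ _ hp.1.2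
    have := vsub_mem_vectorSpan ℝ h1 h2
    rwa [vsub_eq_sub] at this
  obtain ⟨x, hx⟩ := hne
  set W : Submodule ℝ (V n) := vectorSpan ℝ (∑ i ∈ I, A i) with hW
  set l : List (Fin κ) := H.sort (· ≤ ·) with hl
  have hlnd : l.Nodup := Finset.sort_nodup _ _
  have hlH : ∀ h, h ∈ l ↔ h ∈ H := fun h => Finset.mem_sort _
  -- outer application of the one-level transversality lemma
  obtain ⟨_, f, hxW, hxf, hspan⟩ := lvl hx
    (fun _ : Unit => ((Wᗮ : Submodule ℝ (V n)) : Set (V n)))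
    (fun f : ↥(goodCerts E l) =>
      (((Submodule.span ℝ ((f : Fin κ → V n) '' {h | h ∈ l}))ᗮ :
        Submodule ℝ (V n)) : Set (V n)))
    (fun _ => Submodule.closed_of_finiteDimensional _)
    (fun _ => Submodule.closed_of_finiteDimensional _)
    (fun y hy => Set.mem_iUnion.mpr ⟨(), hy⟩)
    (fun y hy => by
      obtain ⟨g, hgm, hgz⟩ := rec_cert A E hE0 hEcov l hlnd y hy
      exact Set.mem_iUnion.mpr ⟨⟨g, hgm⟩, hgz⟩)
  set f0 : Fin κ → V n := (f : Fin κ → V n) with hf0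
  have hfmem := (Finset.mem_filter.mp f.2).1
  have hfgood : GoodC l f0 := (Finset.mem_filter.mp f.2).2
  rw [Fintype.mem_piFinset] at hfmem
  have hfE : ∀ h ∈ H, f0 h ∈ E h := by
    intro h hh
    have := hfmem h
    rwa [if_pos ((hlH h).mpr hh)] at this
  -- trivial intersection of W with the span of the certificate
  have horth : W ⊓ Submodule.span ℝ (f0 '' {h | h ∈ l}) = ⊥ := by
    apply inf_eq_bot_of_orth_sup
    rw [eq_top_iff, ← hspan]
    exact sup_le_sup (span_sub_le hxW) (span_sub_le hxf)
  -- independence modulo W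
  have hmodW : ∀ c : Fin κ → ℝ, (∑ h ∈ H, c h • f0 h) ∈ W → ∀ h ∈ H, c h = 0 := by
    intro c hc
    have hsp : (∑ h ∈ H, c h • f0 h) ∈ Submodule.span ℝ (f0 '' {h | h ∈ l}) := by
      apply Submodule.sum_mem
      intro h' hh'
      exact Submodule.smul_mem _ _ (Submodule.subset_span ⟨h', (hlH h').mpr hh', rfl⟩)
    have h0 : ∑ h ∈ H, c h • f0 h = 0 := by
      have := Submodule.mem_inf.mpr ⟨hc, hsp⟩
      rw [horth] at this
      exact this
    have hHl : l.toFinset = H := Finset.sort_toFinset _ _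
    intro h hh
    exact hfgood c (by rw [hHl]; exact h0) h ((hlH h).mpr hh)
  -- combinatorial contradiction
  intro j hjJ
  by_contra hjI
  have hjH : j ∈ H := by
    have : j ∈ I ∪ H := by rw [hcover]; exact Finset.mem_univ j
    exact (Finset.mem_union.mp this).resolve_left hjI
  set S : Finset (Fin κ) := J ∩ I with hS
  set T : Finset (Fin κ) := J ∩ H with hT
  have hjT : j ∈ T := Finset.mem_inter.mpr ⟨hjJ, hjH⟩
  have hTH : T ⊆ H := Finset.inter_subset_right
  have hST : Disjoint S T :=
    hdisj.mono Finset.inter_subset_right Finset.inter_subset_right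
  have hSTJ : S ∪ T = J := by
    rw [hS, hT, ← Finset.inter_union_distrib_left, hcover, Finset.inter_univ]
  have hsumJ : (∑ i ∈ J, A i) = (∑ i ∈ S, A i) + (∑ i ∈ T, A i) := by
    rw [← hSTJ, Finset.sum_union hST]
  set U : Submodule ℝ (V n) := vectorSpan ℝ (∑ i ∈ S, A i) with hU
  set Z : Submodule ℝ (V n) := vectorSpan ℝ (∑ i ∈ J, A i) with hZ
  have hUW : U ≤ W := by
    have hsub : S ⊆ I := Finset.inter_subset_right
    have hIsum : (∑ i ∈ I, A i) = (∑ i ∈ S, A i) + ∑ i ∈ I \ S, A i := by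
      rw [add_comm, Finset.sum_sdiff hsub]
    rw [hU, hW, hIsum]
    exact vectorSpan_le_add_right (sum_sets_nonempty A hAne _)
  have hUZ : U ≤ Z := by
    rw [hU, hZ, hsumJ]
    exact vectorSpan_le_add_right (sum_sets_nonempty A hAne _)
  -- the selected vectors on T
  set g : ↥T → V n := fun t => f0 ↑t with hg
  have hsum_eq : ∀ c : Fin κ → ℝ, (∀ h, h ∉ T → c h = 0) →
      ∑ h ∈ H, c h • f0 h = ∑ i : ↥T, c ↑i • g i := by
    intro c hc0
    rw [← Finset.sum_subset hTH (fun h _ hh => by rw [hc0 h hh, zero_smul])]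
    rw [← Finset.sum_attach T (fun h => c h • f0 h), Finset.univ_eq_attach]
  have hgli : LinearIndependent ℝ g := by
    rw [Fintype.linearIndependent_iff]
    intro gg hgg i
    set c : Fin κ → ℝ := fun h => if hh : h ∈ T then gg ⟨h, hh⟩ else 0 with hc
    have hcc : ∀ h, h ∉ T → c h = 0 := fun h hh => by rw [hc]; exact dif_neg hh
    have hccT : ∀ i : ↥T, c ↑i = gg i := fun i => by
      rw [hc]; exact dif_pos i.2
    have : ∑ h ∈ H, c h • f0 h = 0 := by
      rw [hsum_eq c hcc]
      rw [Finset.sum_congr rfl fun i _ => by rw [hccT i]]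
      exact hgg
    have hz := hmodW c (this ▸ W.zero_mem)
    rw [← hccT i]
    exact hz ↑i (hTH i.2)
  set P' : Submodule ℝ (V n) := Submodule.span ℝ (Set.range g) with hP'
  have hP'rank : Module.finrank ℝ P' = T.card := by
    rw [hP', finrank_span_eq_card hgli, Fintype.card_coe]
  have hUP' : U ⊓ P' = ⊥ := by
    rw [eq_bot_iff]
    rintro z hz
    obtain ⟨hzU, hzP⟩ := Submodule.mem_inf.mp hz
    rw [hP', Submodule.mem_span_range_iff_exists_fun] at hzP
    obtain ⟨gg, hgg⟩ := hzP
    set c : Fin κ → ℝ := fun h => if hh : h ∈ T then gg ⟨h, hh⟩ else 0 with hc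
    have hcc : ∀ h, h ∉ T → c h = 0 := fun h hh => by rw [hc]; exact dif_neg hh
    have hccT : ∀ i : ↥T, c ↑i = gg i := fun i => by
      rw [hc]; exact dif_pos i.2
    have hzc : ∑ h ∈ H, c h • f0 h = z := by
      rw [hsum_eq c hcc, Finset.sum_congr rfl fun i _ => by rw [hccT i]]
      exact hgg
    have hz0 := hmodW c (by rw [hzc]; exact hUW hzU)
    have : z = 0 := by
      rw [← hzc]
      apply Finset.sum_eq_zero
      intro h hh
      rw [hz0 h hh, zero_smul]
    simp [this]
  have hP'Z : P' ≤ Z := by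
    rw [hP', Submodule.span_le]
    rintro _ ⟨t, rfl⟩
    have h1 : f0 ↑t ∈ vectorSpan ℝ (A ↑t) := hEspan _ _ (hfE ↑t (hTH t.2))
    have h2 : vectorSpan ℝ (A ↑t) ≤ vectorSpan ℝ (∑ i ∈ T, A i) := by
      have : (∑ i ∈ T, A i) = A ↑t + ∑ i ∈ T.erase ↑t, A i := by
        rw [Finset.add_sum_erase _ _ t.2]
      rw [this]
      exact vectorSpan_le_add_right (sum_sets_nonempty A hAne _)
    have h3 : vectorSpan ℝ (∑ i ∈ T, A i) ≤ Z := by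
      rw [hZ, hsumJ]
      exact vectorSpan_le_add_left (sum_sets_nonempty A hAne _)
    exact h3 (h2 h1)
  -- dimension bound
  have hfinrank : Module.finrank ℝ U + T.card ≤ Module.finrank ℝ Z := by
    have h1 := Submodule.finrank_sup_add_finrank_inf_eq U P'
    rw [hUP', finrank_bot, add_zero, hP'rank] at h1
    calc Module.finrank ℝ U + T.card = Module.finrank ℝ ↥(U ⊔ P') := h1.symm
      _ ≤ Module.finrank ℝ Z := Submodule.finrank_mono (sup_le hUZ hP'Z)
  -- tdim contradiction
  have hSJ : S ⊂ J := by
    refine Finset.ssubset_iff_of_subset Finset.inter_subset_left |>.mpr ?_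
    exact ⟨j, hjJ, fun hjS => hjI (Finset.mem_inter.mp hjS).2⟩
  have hlt := hJ.1.2 S hSJ
  have hcard : J.card = S.card + T.card := by
    rw [← hSTJ, Finset.card_union_of_disjoint hST]
  have hge : tdim A S ≤ tdim A J := by
    rw [tdim, tdim]
    have haff : affDim (∑ j ∈ S, A j) + T.card ≤ affDim (∑ j ∈ J, A j) := hfinrank
    rw [hcard]
    push_cast
    push_cast at haff
    linarith
  exact absurd hlt (not_lt.mpr hge)

end
end
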